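/- Let G be the group presented with two generators p, γ and the relations p⁹ = 1 and γ⁻¹pγ = p⁴. If Q is any group admitting a surjective homomorphism G → Q and the abelianization of Q has exactly 6 elements, then Q is abelian; consequently Q is cyclic of order 6. -/

import Mathlib

namespace ClassicalZariski.Stmt8

/-- `p` in the free group on the two generators `p, γ`. -/
def p : FreeGroup (Fin 2) := FreeGroup.of 0

/-- `γ` in the free group on the two generators. -/
def g : FreeGroup (Fin 2) := FreeGroup.of 1

/-- The relations `p⁹ = 1` and `γ⁻¹ p γ = p⁴`. -/
def rels : Set (FreeGroup (Fin 2)) :=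
  { p ^ 9, (g⁻¹ * p * g) * (p ^ 4)⁻¹ }

/-- The group `G` presented by generators `p, γ` and relations `p⁹ = 1`, `γ⁻¹ p γ = p⁴`. -/
def G : Type := PresentedGroup rels

instance : Group G := by unfold G; infer_instance

/-- A group generated by a pairwise commuting set is commutative. -/
private theorem comm_of_gen {H : Type*} [Group H] {s : Set H}
    (htop : Subgroup.closure s = ⊤)
    (hc : ∀ a ∈ s, ∀ b ∈ s, a * b = b * a) (x y : H) : x * y = y * x := by
  have hcent : Subgroup.centralizer s = ⊤ := by
    rw [eq_top_iff, ← htop]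
    exact (Subgroup.closure_le _).mpr fun a ha =>
      Subgroup.mem_centralizer_iff.mpr fun b hb => hc b hb a ha
  have hsc : ∀ a ∈ s, a ∈ Subgroup.center H := by
    intro a ha
    rw [Subgroup.mem_center_iff]
    intro q
    have hq : q ∈ Subgroup.centralizer s := hcent ▸ Subgroup.mem_top q
    exact (Subgroup.mem_centralizer_iff.mp hq a ha).symm
  have hx : x ∈ Subgroup.center H := by
    have : (⊤ : Subgroup H) ≤ Subgroup.center H := by
      rw [← htop]; exact (Subgroup.closure_le _).mpr hsc
    exact this (Subgroup.mem_top x)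
  exact (Subgroup.mem_center_iff.mp hx y).symm

/-- A commutative group of order 6 is cyclic. -/
private theorem isCyclic_of_card_six {H : Type*} [CommGroup H]
    (h : Nat.card H = 6) : IsCyclic H := by
  have : Finite H := Nat.finite_of_card_ne_zero (by omega)
  haveI : Fact (Nat.Prime 2) := ⟨by norm_num⟩
  haveI : Fact (Nat.Prime 3) := ⟨by norm_num⟩
  obtain ⟨x, hx⟩ := exists_prime_orderOf_dvd_card' (G := H) 2 (by rw [h]; norm_num)
  obtain ⟨y, hy⟩ := exists_prime_orderOf_dvd_card' (G := H) 3 (by rw [h]; norm_num)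
  have hxy : orderOf (x * y) = 6 := by
    rw [(Commute.all x y).orderOf_mul_eq_mul_orderOf_of_coprime (by rw [hx, hy]; norm_num),
      hx, hy]
  exact isCyclic_of_orderOf_eq_card (x * y) (by rw [hxy, h])

theorem quotient_abelian_cyclic_six (Q : Type*) [Group Q]
    (hsurj : ∃ f : G →* Q, Function.Surjective f)
    (hab : Nat.card (Abelianization Q) = 6) :
    (∀ a b : Q, a * b = b * a) ∧ Nonempty (Q ≃* Multiplicative (ZMod 6)) := by
  obtain ⟨f, hf⟩ := hsurj
  let φ : FreeGroup (Fin 2) →* Q := f.comp (PresentedGroup.mk rels)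
  have hφ : Function.Surjective φ := hf.comp (PresentedGroup.mk_surjective rels)
  set P : Q := φ p with hPdef
  set C : Q := φ g with hCdef
  have hrel : ∀ r ∈ rels, φ r = 1 := by
    intro r hr
    have h1 : PresentedGroup.mk rels r = 1 :=
      (QuotientGroup.eq_one_iff r).mpr (Subgroup.subset_normalClosure hr)
    show f (PresentedGroup.mk rels r) = 1
    rw [h1]; exact map_one f
  have h9 : P ^ 9 = 1 := by
    have := hrel (p ^ 9) (Set.mem_insert _ _)
    rwa [map_pow] at this
  have hconj : C⁻¹ * P * C = P ^ 4 := by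
    have := hrel ((g⁻¹ * p * g) * (p ^ 4)⁻¹) (Set.mem_insert_of_mem _ rfl)
    rw [map_mul, map_mul, map_mul, map_inv, map_inv, map_pow] at this
    rwa [mul_inv_eq_one] at this
  -- Q is generated by P and C
  have hgen : Subgroup.closure ({P, C} : Set Q) = ⊤ := by
    rw [eq_top_iff]
    rintro q -
    obtain ⟨w, rfl⟩ := hφ q
    induction w using FreeGroup.induction_on with
    | C1 => rw [map_one]; exact one_mem _
    | of i =>
        fin_cases i
        · exact Subgroup.subset_closure (Set.mem_insert _ _)
        · exact Subgroup.subset_closure (Set.mem_insert_of_mem _ rfl)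
    | inv_of i hi => rw [map_inv]; exact inv_mem hi
    | mul a b ha hb => rw [map_mul]; exact mul_mem ha hb
  -- P ^ 3 is central
  have hP3 : P ^ 3 ∈ Subgroup.center Q := by
    have hcentC : C * P ^ 3 = P ^ 3 * C := by
      have h3 : C⁻¹ * P ^ 3 * C = P ^ 3 := by
        have : (C⁻¹ * P * C) ^ 3 = (P ^ 4) ^ 3 := by rw [hconj]
        have hL : (C⁻¹ * P * C) ^ 3 = C⁻¹ * P ^ 3 * C := by
          have := conj_pow (i := 3) (a := C⁻¹) (b := P)
          rwa [inv_inv] at this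
        have hR : (P ^ 4) ^ 3 = P ^ 3 := by
          rw [← pow_mul]
          have : P ^ 12 = P ^ 9 * P ^ 3 := by rw [← pow_add]
          rw [show 4 * 3 = 12 from rfl, this, h9, one_mul]
        rw [hL, hR] at this
        exact this
      rw [mul_assoc, inv_mul_eq_iff_eq_mul] at h3
      exact h3.symm
    rw [Subgroup.mem_center_iff]
    intro q
    have hq : q ∈ Subgroup.closure ({P, C} : Set Q) := hgen ▸ Subgroup.mem_top q
    induction hq using Subgroup.closure_induction with
    | mem a ha =>
        rcases ha with rfl | ha
        · exact (Commute.pow_self P 3).symm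
        · rw [Set.mem_singleton_iff] at ha; subst ha; exact hcentC
    | one => rw [one_mul, mul_one]
    | mul a b _ _ iha ihb => exact Commute.mul_left iha ihb
    | inv a _ iha => exact Commute.inv_left iha
  -- the quotient by the center is commutative
  let π : Q →* Q ⧸ Subgroup.center Q := QuotientGroup.mk' (Subgroup.center Q)
  have hπ : Function.Surjective π := QuotientGroup.mk'_surjective _
  have hπP3 : (π P) ^ 3 = 1 := by
    rw [← map_pow]
    exact (QuotientGroup.eq_one_iff _).mpr hP3
  have hPC : π P * π C = π C * π P := by
    have hPC' : P * C = C * P ^ 4 := by rw [← hconj]; group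
    have : π P * π C = π C * (π P) ^ 4 := by
      rw [← map_mul, hPC', map_mul, map_pow]
    rw [this, show (4 : ℕ) = 3 + 1 from rfl, pow_succ, hπP3, one_mul]
  have hgenQ : Subgroup.closure ({π P, π C} : Set (Q ⧸ Subgroup.center Q)) = ⊤ := by
    have h1 : Subgroup.map π (Subgroup.closure ({P, C} : Set Q)) =
        Subgroup.closure (π '' ({P, C} : Set Q)) := MonoidHom.map_closure π _
    rw [hgen] at h1
    rw [Set.image_insert_eq, Set.image_singleton] at h1
    rw [← h1, ← MonoidHom.range_eq_map]
    exact MonoidHom.range_eq_top.mpr hπ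
  have hcommQ : ∀ x y : Q ⧸ Subgroup.center Q, x * y = y * x := by
    refine comm_of_gen hgenQ ?_
    rintro a (rfl | ha) b (rfl | hb)
    · rfl
    · rw [Set.mem_singleton_iff] at hb; subst hb; exact hPC
    · rw [Set.mem_singleton_iff] at ha; subst ha; exact hPC.symm
    · rw [Set.mem_singleton_iff] at ha hb; subst ha; subst hb; rfl
  -- the quotient by the center is cyclic
  letI : CommGroup (Q ⧸ Subgroup.center Q) :=
    { (inferInstance : Group (Q ⧸ Subgroup.center Q)) with mul_comm := hcommQ }
  haveI : Finite (Abelianization Q) := Nat.finite_of_card_ne_zero (by omega)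
  haveI hcycAb : IsCyclic (Abelianization Q) := isCyclic_of_card_six hab
  let ψ : Abelianization Q →* Q ⧸ Subgroup.center Q := Abelianization.lift π
  have hψ : Function.Surjective ψ := by
    intro x
    obtain ⟨q, rfl⟩ := hπ x
    exact ⟨Abelianization.of q, Abelianization.lift_apply_of π q⟩
  haveI : IsCyclic (Q ⧸ Subgroup.center Q) := isCyclic_of_surjective ψ hψ
  -- hence Q is commutative
  have hcomm : ∀ a b : Q, a * b = b * a := by
    refine commutative_of_cyclic_center_quotient π ?_
    rw [QuotientGroup.ker_mk']
  refine ⟨hcomm, ?_⟩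
  letI : CommGroup Q := { (inferInstance : Group Q) with mul_comm := hcomm }
  let e : Q ≃* Abelianization Q := Abelianization.equivOfComm
  have hcardQ : Nat.card Q = 6 := by rw [← hab]; exact Nat.card_congr e.toEquiv
  haveI hcycQ : IsCyclic Q := isCyclic_of_surjective e.symm.toMonoidHom e.symm.surjective
  have e2 : Multiplicative (ZMod (Nat.card Q)) ≃* Multiplicative (ZMod 6) := by
    rw [hcardQ]
  exact ⟨((zmodCyclicMulEquiv hcycQ).symm.trans e2)⟩

end ClassicalZariski.Stmt8
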